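/- Let τ be the algebra automorphism of rational functions in variables γ_{kl} and c defined by τ(γ_{2k+1,j}) = γ_{2k+1,j}, τ(γ_{2k,j}) = −γ_{2k,j}, τ(c) = −c, extended to shift operators by τ e^{± ic ∂_{γ_{2k-1,j}}} = e^{± ic ∂_{γ_{2k-1,j}}} τ and τ e^{± ic ∂_{γ_{2k,j}}} = e^{∓ ic ∂_{γ_{2k,j}}} τ. Then for the Zhelobenko–Stern difference operators I_{2k+1,2k} and I_{2k+2,2k+1}, one has τ I_{2k+1,2k} = −I_{2k+1,2k} τ and τ (i I_{2k+2,2k+1}) = −(i I_{2k+2,2k+1}) τ. -/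
import Mathlib


open Finset

/-- The space of functions of the Gelfand-Tsetlin variables `γ_{m,j}` (indexed by
pairs `(m,j)` of naturals, `m` the row, `j` the position, both 1-based) and of the
parameter `c`. -/
abbrev GTFun : Type := ((ℕ × ℕ) → ℂ) × ℂ → ℂ

/-- The involution `τ`: `γ_{2k,j} ↦ -γ_{2k,j}`, `γ_{2k+1,j} ↦ γ_{2k+1,j}`, `c ↦ -c`. -/
noncomputable def tauOp (f : GTFun) : GTFun := fun p =>
  f (fun mj => if mj.1 % 2 = 0 then -p.1 mj else p.1 mj, -p.2)

/-- The shift operator `e^{ε ic ∂_{γ_{m,j}}}`: it replaces `γ_{m,j}` by `γ_{m,j} + ε ic`. -/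
noncomputable def shiftOp (m j : ℕ) (ε : ℤ) (f : GTFun) : GTFun := fun p =>
  f (Function.update p.1 (m, j) (p.1 (m, j) + (ε : ℂ) * Complex.I * p.2), p.2)

/-- The Zhelobenko-Stern difference operator `I_{2k+1,2k}`. -/
noncomputable def ZS1 (k : ℕ) (f : GTFun) : GTFun := fun p =>
  let γ := p.1; let c := p.2;
  -(1 / (Complex.I * c)) * ∑ j ∈ Finset.Icc 1 k,
      ((∏ r ∈ Finset.Icc 1 (k - 1), (γ (2 * k - 2, r) + γ (2 * k - 1, j) + Complex.I * c / 2)) *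
        (∏ r ∈ Finset.Icc 1 k, (γ (2 * k - 1, j) - γ (2 * k, r) + Complex.I * c / 2))) /
      (2 * ∏ r ∈ (Finset.Icc 1 k).erase j,
        ((γ (2 * k - 1, j) - γ (2 * k - 1, r)) * (γ (2 * k - 1, j) + γ (2 * k - 1, r) + Complex.I * c))) *
      shiftOp (2 * k - 1) j 1 f p
  - (1 / (Complex.I * c)) * ∑ j ∈ Finset.Icc 1 k,
      ((∏ r ∈ Finset.Icc 1 (k - 1), (γ (2 * k - 1, j) - γ (2 * k - 2, r) - Complex.I * c / 2)) *
        (∏ r ∈ Finset.Icc 1 k, (γ (2 * k, r) + γ (2 * k - 1, j) - Complex.I * c / 2))) /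
      (2 * ∏ r ∈ (Finset.Icc 1 k).erase j,
        ((γ (2 * k - 1, j) - γ (2 * k - 1, r)) * (γ (2 * k - 1, j) + γ (2 * k - 1, r) - Complex.I * c))) *
      shiftOp (2 * k - 1) j (-1) f p

/-- The Zhelobenko-Stern difference operator `i I_{2k+2,2k+1}`. -/
noncomputable def ZS2 (k : ℕ) (f : GTFun) : GTFun := fun p =>
  let γ := p.1; let c := p.2;
  (1 / c) * ∑ j ∈ Finset.Icc 1 k,
      (∏ r ∈ Finset.Icc 1 (k + 1), ((γ (2 * k, j) + Complex.I * c / 2) ^ 2 - γ (2 * k + 1, r) ^ 2)) /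
      (2 * γ (2 * k, j) * (γ (2 * k, j) + Complex.I * c / 2) *
        ∏ r ∈ (Finset.Icc 1 k).erase j, (γ (2 * k, j) ^ 2 - γ (2 * k, r) ^ 2)) *
      shiftOp (2 * k) j 1 f p
  + (1 / c) * ∑ j ∈ Finset.Icc 1 k,
      (∏ r ∈ Finset.Icc 1 k, ((γ (2 * k, j) - Complex.I * c / 2) ^ 2 - γ (2 * k - 1, r) ^ 2)) /
      (2 * γ (2 * k, j) * (γ (2 * k, j) - Complex.I * c / 2) *
        ∏ r ∈ (Finset.Icc 1 k).erase j, (γ (2 * k, j) ^ 2 - γ (2 * k, r) ^ 2)) *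
      shiftOp (2 * k) j (-1) f p
  - (1 / (Complex.I * c)) *
      ((∏ r ∈ Finset.Icc 1 k, γ (2 * k - 1, r)) * (∏ r ∈ Finset.Icc 1 (k + 1), γ (2 * k + 1, r))) /
      (∏ r ∈ Finset.Icc 1 k, ((γ (2 * k, r) + Complex.I * c / 2) * (γ (2 * k, r) - Complex.I * c / 2))) *
      f p


lemma negEven_update (γ : (ℕ×ℕ) → ℂ) (m j : ℕ) (v : ℂ) :
    (fun mj : ℕ×ℕ => if mj.1 % 2 = 0 then -(Function.update γ (m,j) v mj)
      else Function.update γ (m,j) v mj)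
    = Function.update (fun mj : ℕ×ℕ => if mj.1 % 2 = 0 then -γ mj else γ mj) (m,j)
        (if m % 2 = 0 then -v else v) := by
  funext x
  rcases eq_or_ne x (m,j) with h|h
  · subst h; simp
  · simp [Function.update_of_ne h]

lemma shift_tau_odd (m j : ℕ) (hm : m % 2 = 1) (ε : ℤ) (f : GTFun) (p : ((ℕ × ℕ) → ℂ) × ℂ) :
    shiftOp m j ε f (fun mj => if mj.1 % 2 = 0 then -p.1 mj else p.1 mj, -p.2)
    = shiftOp m j (-ε) (tauOp f) p := by
  simp only [shiftOp, tauOp, negEven_update, hm]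
  norm_num [hm]

lemma shift_tau_even (m j : ℕ) (hm : m % 2 = 0) (ε : ℤ) (f : GTFun) (p : ((ℕ × ℕ) → ℂ) × ℂ) :
    shiftOp m j ε f (fun mj => if mj.1 % 2 = 0 then -p.1 mj else p.1 mj, -p.2)
    = shiftOp m j ε (tauOp f) p := by
  simp only [shiftOp, tauOp, negEven_update, hm]
  norm_num [hm]
  rw [add_comm (-p.1 (m, j))]

/-- `τ` anticommutes with the Zhelobenko-Stern operators:
`τ I_{2k+1,2k} = -I_{2k+1,2k} τ` and `τ (i I_{2k+2,2k+1}) = -(i I_{2k+2,2k+1}) τ`. -/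
theorem tau_anticommutes_with_ZS (k : ℕ) (hk : 1 ≤ k) :
    (∀ f : GTFun, tauOp (ZS1 k f) = -(ZS1 k (tauOp f))) ∧
    (∀ f : GTFun, tauOp (ZS2 k f) = -(ZS2 k (tauOp f))) := by
  have hodd : (2*k-1) % 2 = 1 := by omega
  have hodd1 : (2*k+1) % 2 = 1 := by omega
  have heven2 : (2*k-2) % 2 = 0 := by omega
  have heven : (2*k) % 2 = 0 := Nat.mul_mod_right 2 k
  constructor
  · intro f
    funext p
    simp only [tauOp, ZS1, Pi.neg_apply, hodd, heven2, heven, shift_tau_odd _ _ hodd, neg_neg,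
      reduceCtorEq, if_false, if_true, Nat.one_ne_zero]
    have f1 : ∀ a b : ℂ, -a + b + Complex.I * -p.2 / 2 = b - a - Complex.I * p.2 / 2 :=
      fun a b => by ring
    have f2 : ∀ a b : ℂ, (a - -b) + Complex.I * -p.2 / 2 = b + a - Complex.I * p.2 / 2 :=
      fun a b => by ring
    have f3 : ∀ a b : ℂ, a + b + Complex.I * -p.2 = a + b - Complex.I * p.2 :=
      fun a b => by ring
    have f4 : ∀ a b : ℂ, a - -b - Complex.I * -p.2 / 2 = b + a + Complex.I * p.2 / 2 :=
      fun a b => by ring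
    have f5 : ∀ a b : ℂ, -a + b - Complex.I * -p.2 / 2 = b - a + Complex.I * p.2 / 2 :=
      fun a b => by ring
    have f6 : ∀ a b : ℂ, a + b - Complex.I * -p.2 = a + b + Complex.I * p.2 :=
      fun a b => by ring
    simp only [f1, f2, f3, f4, f5, f6]
    ring
  · intro f
    funext p
    simp only [tauOp, ZS2, Pi.neg_apply, hodd, hodd1, heven, shift_tau_even _ _ heven, neg_neg,
      reduceCtorEq, if_false, if_true, Nat.one_ne_zero]
    have g1 : ∀ a b : ℂ, (-a + Complex.I * -p.2 / 2) ^ 2 - b ^ 2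
        = (a + Complex.I * p.2 / 2) ^ 2 - b ^ 2 := fun a b => by ring
    have g2 : ∀ a b : ℂ, (-a - Complex.I * -p.2 / 2) ^ 2 - b ^ 2
        = (a - Complex.I * p.2 / 2) ^ 2 - b ^ 2 := fun a b => by ring
    have g3 : ∀ a b : ℂ, (-a) ^ 2 - (-b) ^ 2 = a ^ 2 - b ^ 2 := fun a b => by ring
    have g4 : ∀ a : ℂ, 2 * -a * (-a + Complex.I * -p.2 / 2) = 2 * a * (a + Complex.I * p.2 / 2) :=
      fun a => by ring
    have g5 : ∀ a : ℂ, 2 * -a * (-a - Complex.I * -p.2 / 2) = 2 * a * (a - Complex.I * p.2 / 2) :=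
      fun a => by ring
    have g6 : ∀ a : ℂ, (-a + Complex.I * -p.2 / 2) * (-a - Complex.I * -p.2 / 2)
        = (a + Complex.I * p.2 / 2) * (a - Complex.I * p.2 / 2) := fun a => by ring
    simp only [g1, g2, g3, g4, g5, g6]
    ring
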